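/- Let n ≥ 1 and let H be an operator mapping signals u : [0,∞) → ℝⁿ to signals, which is causal (for every T ≥ 0 and every signal u in L2e, the truncation to [0,T] of H(u) equals a.e. the truncation to [0,T] of H applied to the truncation of u), maps L2 into L2, and maps L2e into L2e. Let a, b, c ∈ ℝ and suppose there exists ε > 0 with a ≤ −ε and c ≥ ε (the multiplier [[a,b],[b,c]] is positive-negative). Then H satisfies the soft IQC, i.e. ∫₀^∞ ( a‖(Hu)(t)‖² + 2b⟨(Hu)(t), u(t)⟩ + c‖u(t)‖² ) dt ≥ 0 for every u ∈ L2 with integrable integrand, if and only if H satisfies the hard IQC, i.e. ∫₀^T ( a‖(Hu)(t)‖² + 2b⟨(Hu)(t), u(t)⟩ + c‖u(t)‖² ) dt ≥ 0 for every T > 0 and every u ∈ L2e. -/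

import Mathlib

open MeasureTheory

noncomputable section

/-- A signal is a function `ℝ → ℝⁿ`; only its values on `[0,∞)` matter. -/
abbrev Signal (n : ℕ) := ℝ → EuclideanSpace ℝ (Fin n)

/-- Truncation `P_T u`: pointwise product of `u` with the indicator of `[0,T]`. -/
def trunc {n : ℕ} (T : ℝ) (u : Signal n) : Signal n :=
  (Set.Icc (0 : ℝ) T).indicator u

/-- `u ∈ L2`: a.e.-strongly measurable on `[0,∞)` with `∫₀^∞ ‖u(t)‖² dt < ∞`. -/
def InL2 {n : ℕ} (u : Signal n) : Prop :=
  AEStronglyMeasurable u (volume.restrict (Set.Ici (0 : ℝ))) ∧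
    Integrable (fun t => ‖u t‖ ^ 2) (volume.restrict (Set.Ici (0 : ℝ)))

/-- `u ∈ L2e`: every truncation of `u` lies in `L2`. -/
def InL2e {n : ℕ} (u : Signal n) : Prop :=
  ∀ T ≥ (0 : ℝ), InL2 (trunc T u)

/-- `H` is causal: `P_T (H u) = P_T (H (P_T u))` a.e., for all `T ≥ 0` and `u ∈ L2e`. -/
def Causal {n : ℕ} (H : Signal n → Signal n) : Prop :=
  ∀ T ≥ (0 : ℝ), ∀ u : Signal n, InL2e u →
    trunc T (H u) =ᵐ[volume] trunc T (H (trunc T u))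

/-- The IQC integrand `a‖y(t)‖² + 2b⟨y(t),u(t)⟩ + c‖u(t)‖²` for the static multiplier
`Π = [[a,b],[b,c]]`. -/
def iqcIntegrand {n : ℕ} (a b c : ℝ) (u y : Signal n) (t : ℝ) : ℝ :=
  a * ‖y t‖ ^ 2 + 2 * b * (inner ℝ (y t) (u t) : ℝ) + c * ‖u t‖ ^ 2


lemma trunc_inL2 {n : ℕ} (u : Signal n) (hu : InL2 u) (T : ℝ) : InL2 (trunc T u) := by
  constructor
  · exact hu.1.indicator measurableSet_Icc
  · have h : (fun t => ‖trunc T u t‖ ^ 2)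
        = Set.indicator (Set.Icc (0:ℝ) T) (fun t => ‖u t‖ ^ 2) := by
      funext t
      by_cases ht : t ∈ Set.Icc (0:ℝ) T
      · simp [trunc, Set.indicator_of_mem ht]
      · simp [trunc, Set.indicator_of_notMem ht]
    rw [h]
    exact hu.2.indicator measurableSet_Icc

lemma InL2.inL2e {n : ℕ} (u : Signal n) (hu : InL2 u) : InL2e u :=
  fun T _ => trunc_inL2 u hu T

lemma iqc_integrable {n : ℕ} (a b c : ℝ) (u y : Signal n) (hu : InL2 u) (hy : InL2 y) :
    Integrable (iqcIntegrand a b c u y) (volume.restrict (Set.Ici (0 : ℝ))) := by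
  have hinner : Integrable (fun t => (inner ℝ (y t) (u t) : ℝ))
      (volume.restrict (Set.Ici (0 : ℝ))) := by
    refine Integrable.mono' ((hy.2.div_const 2).add (hu.2.div_const 2))
      (hy.1.inner hu.1) ?_
    filter_upwards with t
    have h1 := abs_real_inner_le_norm (y t) (u t)
    have h2 : ‖y t‖ * ‖u t‖ ≤ ‖y t‖ ^ 2 / 2 + ‖u t‖ ^ 2 / 2 := by
      nlinarith [sq_nonneg (‖y t‖ - ‖u t‖)]
    show ‖(inner ℝ (y t) (u t) : ℝ)‖ ≤ ‖y t‖ ^ 2 / 2 + ‖u t‖ ^ 2 / 2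
    rw [Real.norm_eq_abs]
    linarith
  exact ((hy.2.const_mul a).add (hinner.const_mul (2 * b))).add (hu.2.const_mul c)

/-- Soft–hard IQC equivalence for a causal, `L2`-stable operator and a
positive-negative static multiplier `[[a,b],[b,c]]` (i.e. `a ≤ -ε`, `c ≥ ε` for some
`ε > 0`): the soft IQC holds for all `u ∈ L2` (with integrable integrand) iff the hard
IQC holds for all horizons `T > 0` and all `u ∈ L2e`. -/
theorem stmt0 {n : ℕ} (hn : 1 ≤ n) (H : Signal n → Signal n)
    (hcausal : Causal H)
    (hL2 : ∀ u, InL2 u → InL2 (H u))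
    (hL2e : ∀ u, InL2e u → InL2e (H u))
    (a b c : ℝ) (hpn : ∃ ε > (0 : ℝ), a ≤ -ε ∧ ε ≤ c) :
    (∀ u : Signal n, InL2 u →
        Integrable (iqcIntegrand a b c u (H u)) (volume.restrict (Set.Ici (0 : ℝ))) →
        0 ≤ ∫ t in Set.Ici (0 : ℝ), iqcIntegrand a b c u (H u) t) ↔
    (∀ u : Signal n, InL2e u → ∀ T > (0 : ℝ),
        0 ≤ ∫ t in Set.Icc (0 : ℝ) T, iqcIntegrand a b c u (H u) t) := by
  obtain ⟨ε, hε, ha, hc⟩ := hpn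
  constructor
  · -- soft → hard
    intro hsoft u hu T hT
    set v := trunc T u with hv_def
    have hv : InL2 v := hu T hT.le
    have hHv : InL2 (H v) := hL2 v hv
    have hint : Integrable (iqcIntegrand a b c v (H v))
        (volume.restrict (Set.Ici (0 : ℝ))) := iqc_integrable a b c v (H v) hv hHv
    have hsoft' : 0 ≤ ∫ t in Set.Ici (0 : ℝ), iqcIntegrand a b c v (H v) t :=
      hsoft v hv hint
    -- split Ici 0 = Icc 0 T ∪ Ioi T
    have hIOn : IntegrableOn (iqcIntegrand a b c v (H v)) (Set.Ici 0) volume := hint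
    have hintIcc : IntegrableOn (iqcIntegrand a b c v (H v)) (Set.Icc 0 T) volume :=
      hIOn.mono_set Set.Icc_subset_Ici_self
    have hintIoi : IntegrableOn (iqcIntegrand a b c v (H v)) (Set.Ioi T) volume :=
      hIOn.mono_set (fun x hx => le_trans hT.le (le_of_lt hx))
    have hsplit : ∫ t in Set.Ici (0:ℝ), iqcIntegrand a b c v (H v) t
        = (∫ t in Set.Icc (0:ℝ) T, iqcIntegrand a b c v (H v) t)
          + ∫ t in Set.Ioi T, iqcIntegrand a b c v (H v) t := by
      rw [← Set.Icc_union_Ioi_eq_Ici hT.le]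
      exact setIntegral_union (Set.disjoint_left.2 fun x hx hx' => absurd hx.2 (not_le.2 hx'))
        measurableSet_Ioi
        hintIcc hintIoi
    have htail : ∫ t in Set.Ioi T, iqcIntegrand a b c v (H v) t ≤ 0 := by
      refine setIntegral_nonpos measurableSet_Ioi fun t ht => ?_
      have hv0 : v t = 0 := by
        apply Set.indicator_of_notMem
        simp only [Set.mem_Icc, not_and_or, not_le]
        exact Or.inr ht
      simp only [iqcIntegrand, hv0, norm_zero, inner_zero_right, mul_zero, add_zero]
      have : a * ‖H v t‖ ^ 2 ≤ 0 := by nlinarith [sq_nonneg ‖H v t‖]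
      simpa using this
    have hIcc : 0 ≤ ∫ t in Set.Icc (0:ℝ) T, iqcIntegrand a b c v (H v) t := by
      linarith [hsplit ▸ hsoft']
    -- transfer back to u via causality
    have hcause := hcausal T hT.le u hu
    have hcong : ∫ t in Set.Icc (0:ℝ) T, iqcIntegrand a b c u (H u) t
        = ∫ t in Set.Icc (0:ℝ) T, iqcIntegrand a b c v (H v) t := by
      refine setIntegral_congr_ae measurableSet_Icc ?_
      filter_upwards [hcause] with t ht hmem
      have h1 : H u t = H v t := by
        have := ht
        rwa [trunc, trunc, Set.indicator_of_mem hmem, Set.indicator_of_mem hmem] at this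
      have h2 : u t = v t := (Set.indicator_of_mem hmem u).symm
      simp [iqcIntegrand, h1, h2]
    rw [hcong]; exact hIcc
  · -- hard → soft
    intro hhard u hu hint
    have hue : InL2e u := InL2.inL2e u hu
    have hunion : (⋃ k : ℕ, Set.Icc (0:ℝ) (k+1)) = Set.Ici 0 := by
      ext t
      simp only [Set.mem_iUnion, Set.mem_Icc, Set.mem_Ici]
      constructor
      · rintro ⟨k, h0, _⟩; exact h0
      · intro h0
        obtain ⟨k, hk⟩ := exists_nat_ge t
        exact ⟨k, h0, le_trans hk (by linarith)⟩
    have hmono : Monotone (fun k : ℕ => Set.Icc (0:ℝ) (k+1)) := by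
      intro i j hij
      have : (i : ℝ) ≤ j := Nat.cast_le.2 hij
      exact Set.Icc_subset_Icc le_rfl (by linarith)
    have hIOn : IntegrableOn (iqcIntegrand a b c u (H u))
        (⋃ k : ℕ, Set.Icc (0:ℝ) (k+1)) volume := by
      rw [hunion]; exact hint
    have htend := tendsto_setIntegral_of_monotone
      (fun k : ℕ => measurableSet_Icc) hmono hIOn
    have hle : 0 ≤ ∫ t in (⋃ k : ℕ, Set.Icc (0:ℝ) (k+1)),
        iqcIntegrand a b c u (H u) t := by
      refine ge_of_tendsto htend ?_
      filter_upwards with k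
      exact hhard u hue (k + 1) (by positivity)
    rwa [hunion] at hle

end
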